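/- Let H be an inner product space, a ∈ H a unit vector, x_1,…,x_n ∈ H and k_1,…,k_n ≥ 0 such that ‖x_i‖ − Re⟨a, x_i⟩ ≤ k_i for each i. Then 0 ≤ ∑_{i=1}^n ‖x_i‖ − ‖∑_{i=1}^n x_i‖ ≤ ∑_{i=1}^n k_i. -/

import Mathlib

theorem stmt_2 {𝕜 H : Type*} [RCLike 𝕜] [NormedAddCommGroup H] [InnerProductSpace 𝕜 H]
    (n : ℕ) (a : H) (ha : ‖a‖ = 1) (x : ℕ → H) (k : ℕ → ℝ)
    (hk : ∀ i ∈ Finset.Icc 1 n, 0 ≤ k i)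
    (h : ∀ i ∈ Finset.Icc 1 n, ‖x i‖ - RCLike.re (inner 𝕜 a (x i) : 𝕜) ≤ k i) :
    0 ≤ (∑ i ∈ Finset.Icc 1 n, ‖x i‖) - ‖∑ i ∈ Finset.Icc 1 n, x i‖ ∧
      (∑ i ∈ Finset.Icc 1 n, ‖x i‖) - ‖∑ i ∈ Finset.Icc 1 n, x i‖ ≤
        ∑ i ∈ Finset.Icc 1 n, k i := by
  constructor
  · have := norm_sum_le (Finset.Icc 1 n) x
    linarith
  · have h1 : RCLike.re (inner 𝕜 a (∑ i ∈ Finset.Icc 1 n, x i) : 𝕜) ≤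
        ‖∑ i ∈ Finset.Icc 1 n, x i‖ := by
      calc RCLike.re (inner 𝕜 a (∑ i ∈ Finset.Icc 1 n, x i) : 𝕜)
          ≤ ‖(inner 𝕜 a (∑ i ∈ Finset.Icc 1 n, x i) : 𝕜)‖ := RCLike.re_le_norm _
        _ ≤ ‖a‖ * ‖∑ i ∈ Finset.Icc 1 n, x i‖ := norm_inner_le_norm _ _
        _ = ‖∑ i ∈ Finset.Icc 1 n, x i‖ := by rw [ha, one_mul]
    have h2 : RCLike.re (inner 𝕜 a (∑ i ∈ Finset.Icc 1 n, x i) : 𝕜) =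
        ∑ i ∈ Finset.Icc 1 n, RCLike.re (inner 𝕜 a (x i) : 𝕜) := by
      rw [inner_sum, map_sum]
    have h3 : (∑ i ∈ Finset.Icc 1 n, ‖x i‖) -
        ∑ i ∈ Finset.Icc 1 n, RCLike.re (inner 𝕜 a (x i) : 𝕜) ≤
        ∑ i ∈ Finset.Icc 1 n, k i := by
      rw [← Finset.sum_sub_distrib]
      exact Finset.sum_le_sum h
    linarith
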